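/- Let q be an even integer with 0 < q < m. Then for every t ∈ V_m, ξ⁺_q(t)·(ξ⁻_1(t) − ξ⁻_1(q)) = (q+1)·ξ⁻_{q+1}(t) in R, where ξ⁻_1(q) ∈ R is the value of ξ⁻_1 at the vertex q. -/

import Mathlib

noncomputable section

open Finset MvPolynomial

/-- The coefficient ring `R = ℚ[α,δ]`, realized as polynomials in two variables. -/
abbrev Rpoly : Type := MvPolynomial (Fin 2) ℚ

/-- The variable `α`. -/
def va : Rpoly := X 0

/-- The variable `δ`. -/
def vd : Rpoly := X 1

/-- `P⁻(a,b) = ∏_{k=a}^{b} (−α + k·δ)`. -/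
def Pneg (a b : ℤ) : Rpoly :=
  ∏ k ∈ Finset.Icc a b, (-va + MvPolynomial.C (k : ℚ) * vd)

/-- `P⁺(a,b) = ∏_{k=a}^{b} (α + k·δ)`. -/
def Ppos (a b : ℤ) : Rpoly :=
  ∏ k ∈ Finset.Icc a b, (va + MvPolynomial.C (k : ℚ) * vd)

/-- Binomial coefficient `C(n,q)` (all uses have `n ≥ 0`). -/
def B (n : ℤ) (q : ℕ) : ℚ := (n.toNat).choose q

/-- The Knutson–Tao class `ξ⁺_q = ξ(m+q, m−q)`, as a function on vertices `t`
(the vertex `t` encodes the pair `(m+t, m−t)`). -/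
def xiP (m : ℤ) (q : ℕ) (t : ℤ) : Rpoly :=
  if (q : ℤ) ≤ t ∧ t ≤ m then
    MvPolynomial.C (B (⌈((t : ℚ) - (q : ℚ) + 1) / 2⌉ + q - 1) q) *
      Pneg (⌈((t : ℚ) - (q : ℚ) + 1) / 2⌉ - 1) (⌈((t : ℚ) - (q : ℚ) + 1) / 2⌉ + q - 2)
  else if -m ≤ t ∧ t ≤ -((q : ℤ) + 1) then
    MvPolynomial.C (B (⌈(-(t : ℚ) - (q : ℚ)) / 2⌉ + q - 1) q) *
      Ppos (⌈(-(t : ℚ) - (q : ℚ)) / 2⌉ + 1) (⌈(-(t : ℚ) - (q : ℚ)) / 2⌉ + q)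
  else 0

/-- The Knutson–Tao class `ξ⁻_q = ξ(m−q, m+q)`. -/
def xiM (m : ℤ) (q : ℕ) (t : ℤ) : Rpoly :=
  if (q : ℤ) + 1 ≤ t ∧ t ≤ m then
    MvPolynomial.C (B (⌈((t : ℚ) - (q : ℚ)) / 2⌉ + q - 1) q) *
      Pneg (⌈((t : ℚ) - (q : ℚ)) / 2⌉) (⌈((t : ℚ) - (q : ℚ)) / 2⌉ + q - 1)
  else if -m ≤ t ∧ t ≤ -(q : ℤ) then
    MvPolynomial.C (B (⌈(-(t : ℚ) - (q : ℚ) + 1) / 2⌉ + q - 1) q) *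
      Ppos (⌈(-(t : ℚ) - (q : ℚ) + 1) / 2⌉) (⌈(-(t : ℚ) - (q : ℚ) + 1) / 2⌉ + q - 1)
  else 0

/-- The weight of the vertex `t`: `w(t) = ((1−2t)/2)·α + (t(t−1)/2)·δ`. -/
def w (t : ℤ) : Rpoly :=
  MvPolynomial.C ((1 - 2 * (t : ℚ)) / 2) * va +
    MvPolynomial.C (((t : ℚ) * ((t : ℚ) - 1)) / 2) * vd

-- helper lemmas

lemma ceil_half (k : ℤ) : ⌈(k:ℚ)/2⌉ = (k+1)/2 := by
  rcases Int.even_or_odd k with ⟨j,rfl⟩ | ⟨j,rfl⟩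
  · have : ((j+j:ℤ):ℚ)/2 = ((j:ℤ):ℚ) := by push_cast; ring
    rw [this, Int.ceil_intCast]; omega
  · have : ((2*j+1:ℤ):ℚ)/2 = (1:ℚ)/2 + (j:ℤ) := by push_cast; ring
    rw [this, Int.ceil_add_intCast]
    have h1 : ⌈(1:ℚ)/2⌉ = 1 := by norm_num [Int.ceil_eq_iff]
    omega

lemma Pneg_single (a : ℤ) : Pneg a a = -va + MvPolynomial.C (a:ℚ) * vd := by
  unfold Pneg; simp

lemma Ppos_single (a : ℤ) : Ppos a a = va + MvPolynomial.C (a:ℚ) * vd := by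
  unfold Ppos; simp

lemma Pneg_top (a b : ℤ) (h : a ≤ b) :
    Pneg a b = Pneg a (b-1) * (-va + MvPolynomial.C (b : ℚ) * vd) := by
  unfold Pneg
  have : Finset.Icc a b = insert b (Finset.Icc a (b-1)) := by
    ext x; simp [Finset.mem_Icc]; omega
  rw [this, Finset.prod_insert (by simp)]
  ring

lemma Ppos_bot (a b : ℤ) (h : a ≤ b) :
    Ppos a b = (va + MvPolynomial.C (a : ℚ) * vd) * Ppos (a+1) b := by
  unfold Ppos
  have : Finset.Icc a b = insert a (Finset.Icc (a+1) b) := by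
    ext x; simp [Finset.mem_Icc]; omega
  rw [this, Finset.prod_insert (by simp)]

lemma choose1 (n q : ℕ) (h : q ≤ n) :
    ((n.choose q : ℚ)) * ((n:ℚ) - q) = (q+1) * (n.choose (q+1)) := by
  have := Nat.choose_succ_right_eq n q
  have h2 : ((n.choose (q+1):ℚ)) * ((q:ℚ)+1) = (n.choose q) * ((n:ℚ) - q) := by
    push_cast [Nat.cast_sub h] at this ⊢
    exact_mod_cast this
  linarith

lemma choose2 (n q : ℕ) (h : 1 ≤ n) :
    (n:ℚ) * ((n-1).choose q : ℚ) = (q+1) * (n.choose (q+1)) := by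
  have := Nat.add_one_mul_choose_eq (n-1) q
  rw [Nat.sub_add_cancel h] at this
  have h2 : (n:ℚ) * ((n-1).choose q) = (n.choose (q+1)) * ((q:ℚ)+1) := by
    exact_mod_cast this
  linarith

lemma B_one (n : ℤ) (h : 0 ≤ n) : B n 1 = (n:ℚ) := by
  unfold B
  rw [Nat.choose_one_right]
  exact_mod_cast congrArg (fun z : ℤ => (z:ℚ)) (Int.toNat_of_nonneg h)

lemma cast_toNat (n : ℤ) (h : 0 ≤ n) : ((n.toNat : ℕ) : ℚ) = (n:ℚ) := by
  exact_mod_cast congrArg (fun z : ℤ => (z:ℚ)) (Int.toNat_of_nonneg h)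

lemma Bmul1 (n : ℤ) (k : ℕ) (h : (k:ℤ) ≤ n) :
    B n k * ((n:ℚ) - k) = ((k:ℚ)+1) * B n (k+1) := by
  unfold B
  have h0 : (0:ℤ) ≤ n := le_trans (Int.ofNat_nonneg k) h
  rw [← cast_toNat n h0]
  exact choose1 n.toNat k (by omega)

lemma Bmul2 (n : ℤ) (k : ℕ) (h : 1 ≤ n) :
    (n:ℚ) * B (n-1) k = ((k:ℚ)+1) * B n (k+1) := by
  unfold B
  have e : (n-1).toNat = n.toNat - 1 := by omega
  rw [e, ← cast_toNat n (by omega)]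
  exact choose2 n.toNat k (by omega)

-- branch evaluation lemmas
lemma xiM_pos (m : ℤ) (q : ℕ) (t c d : ℤ) (h1 : (q:ℤ)+1 ≤ t) (h2 : t ≤ m)
    (hc : (t - q + 1)/2 = c) (hd : c + q - 1 = d) :
    xiM m q t = MvPolynomial.C (B d q) * Pneg c d := by
  unfold xiM
  rw [if_pos ⟨h1, h2⟩]
  have e : ((t:ℚ) - (q:ℚ)) = ((t - q : ℤ):ℚ) := by push_cast; ring
  rw [e, ceil_half, hc, hd]

lemma xiM_neg (m : ℤ) (q : ℕ) (t c d : ℤ) (h1 : -m ≤ t) (h2 : t ≤ -(q:ℤ))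
    (h3 : 0 < q) (hc : (-t - q + 2)/2 = c) (hd : c + q - 1 = d) :
    xiM m q t = MvPolynomial.C (B d q) * Ppos c d := by
  unfold xiM
  rw [if_neg (by omega), if_pos ⟨h1, h2⟩]
  have e : (-(t:ℚ) - (q:ℚ) + 1) = ((-t - q + 1 : ℤ):ℚ) := by push_cast; ring
  rw [e, ceil_half, show (-t - (q:ℤ) + 1 + 1)/2 = c by omega, hd]

lemma xiM_zero (m : ℤ) (q : ℕ) (t : ℤ) (h1 : -(q:ℤ)+1 ≤ t) (h2 : t ≤ (q:ℤ)) :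
    xiM m q t = 0 := by
  unfold xiM
  rw [if_neg (by omega), if_neg (by omega)]

lemma xiP_pos (m : ℤ) (q : ℕ) (t c d e f : ℤ) (h1 : (q:ℤ) ≤ t) (h2 : t ≤ m)
    (hc : (t - q + 2)/2 = c) (hd : c - 1 = d) (he : c + q - 2 = e) (hf : c + q - 1 = f) :
    xiP m q t = MvPolynomial.C (B f q) * Pneg d e := by
  unfold xiP
  rw [if_pos ⟨h1, h2⟩]
  have e' : ((t:ℚ) - (q:ℚ) + 1) = ((t - q + 1 : ℤ):ℚ) := by push_cast; ring
  rw [e', ceil_half, show (t - (q:ℤ) + 1 + 1)/2 = c by omega, hd, he, hf]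

lemma xiP_neg (m : ℤ) (q : ℕ) (t c d e f : ℤ) (h1 : -m ≤ t) (h2 : t ≤ -((q:ℤ)+1))
    (hc : (-t - q + 1)/2 = c) (hd : c + 1 = d) (he : c + q = e) (hf : c + q - 1 = f) :
    xiP m q t = MvPolynomial.C (B f q) * Ppos d e := by
  unfold xiP
  rw [if_neg (by omega), if_pos ⟨h1, h2⟩]
  have e' : (-(t:ℚ) - (q:ℚ)) = ((-t - q : ℤ):ℚ) := by push_cast; ring
  rw [e', ceil_half, show (-t - (q:ℤ) + 1)/2 = c from hc, hd, hf, he]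

lemma xiP_zero (m : ℤ) (q : ℕ) (t : ℤ) (h1 : -(q:ℤ) ≤ t) (h2 : t ≤ (q:ℤ)-1) :
    xiP m q t = 0 := by
  unfold xiP
  rw [if_neg (by omega), if_neg (by omega)]

/-- for even `0 < q < m`,
`ξ⁺_q · (ξ⁻_1 − ξ⁻_1(q)) = (q+1) · ξ⁻_{q+1}` pointwise on `V_m`. -/
theorem statement6 (m : ℕ) (hm : 1 ≤ m) (q : ℕ) (heven : Even q)
    (hq0 : 0 < q) (hqm : q < m)
    (t : ℤ) (ht1 : -(m : ℤ) ≤ t) (ht2 : t ≤ (m : ℤ)) :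
    xiP m q t * (xiM m 1 t - xiM m 1 (q : ℤ)) = ((q + 1 : ℕ) : Rpoly) * xiM m (q + 1) t := by
  obtain ⟨p, hp⟩ := heven
  have EQ : xiM (m:ℤ) 1 (q:ℤ) = MvPolynomial.C (B (p:ℤ) 1) * Pneg (p:ℤ) (p:ℤ) :=
    xiM_pos (m:ℤ) 1 (q:ℤ) (p:ℤ) (p:ℤ) (by omega) (by omega) (by omega) (by omega)
  rcases le_or_gt t (-(q:ℤ)-1) with hneg | h1
  · -- negative side
    set i : ℤ := (-t+1)/2 with hi
    have hip : (p:ℤ) + 1 ≤ i := by omega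
    have EP : xiP (m:ℤ) q t
        = MvPolynomial.C (B (i + p - 1) q) * Ppos (i - p + 1) (i + p) :=
      xiP_neg (m:ℤ) q t (i - p) (i - p + 1) (i + p) (i + p - 1) ht1 (by omega)
        (by omega) (by omega) (by omega) (by omega)
    have EM : xiM (m:ℤ) 1 t = MvPolynomial.C (B i 1) * Ppos i i :=
      xiM_neg (m:ℤ) 1 t i i ht1 (by omega) (by omega) (by omega) (by omega)
    have ER : xiM (m:ℤ) (q+1) t
        = MvPolynomial.C (B (i + p) (q+1)) * Ppos (i - p) (i + p) :=
      xiM_neg (m:ℤ) (q+1) t (i - p) (i + p) ht1 (by omega) (by omega) (by omega) (by omega)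
    rw [EP, EM, EQ, ER, Ppos_single, Pneg_single, B_one i (by omega), B_one (p:ℤ) (by omega)]
    have hdiff : (MvPolynomial.C ((i:ℤ):ℚ)) * (va + MvPolynomial.C ((i:ℤ):ℚ) * vd)
        - (MvPolynomial.C (((p:ℤ)):ℚ)) * (-va + MvPolynomial.C (((p:ℤ)):ℚ) * vd)
        = MvPolynomial.C (((i + p : ℤ)):ℚ) * (va + MvPolynomial.C (((i - p : ℤ)):ℚ) * vd) := by
      push_cast
      rw [map_add, map_sub]
      ring
    have key : Ppos (i - p) (i + p)
        = (va + MvPolynomial.C (((i - p : ℤ)):ℚ) * vd) * Ppos (i - p + 1) (i + p) :=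
      Ppos_bot (i - p) (i + p) (by omega)
    have hsc : (MvPolynomial.C (B (i + p - 1) q) * MvPolynomial.C (((i + p : ℤ)):ℚ) : Rpoly)
        = MvPolynomial.C (((q+1:ℕ)):ℚ) * MvPolynomial.C (B (i + p) (q+1)) := by
      rw [← map_mul, ← map_mul]
      congr 1
      have h := Bmul2 (i + (p:ℤ)) q (by omega)
      push_cast at h ⊢
      linarith [h]
    rw [hdiff, key, ← map_natCast (MvPolynomial.C : ℚ →+* Rpoly) (q+1)]
    linear_combination ((va + MvPolynomial.C (((i - p : ℤ)):ℚ) * vd) * Ppos (i - p + 1) (i + p)) * hsc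
  rcases le_or_gt t ((q:ℤ)-1) with hmid | h2
  · -- middle zero region
    rw [xiP_zero (m:ℤ) q t (by omega) hmid, xiM_zero (m:ℤ) (q+1) t (by omega) (by omega)]
    simp
  rcases le_or_gt t ((q:ℤ)+1) with hbd | h3
  · -- t = q or q+1
    have EM : xiM (m:ℤ) 1 t = MvPolynomial.C (B (p:ℤ) 1) * Pneg (p:ℤ) (p:ℤ) :=
      xiM_pos (m:ℤ) 1 t (p:ℤ) (p:ℤ) (by omega) (by omega) (by omega) (by omega)
    rw [EM, EQ, xiM_zero (m:ℤ) (q+1) t (by omega) (by omega)]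
    simp
  · -- main positive case
    set j : ℤ := t/2 with hj
    have hjp : (p:ℤ) + 1 ≤ j := by omega
    have EP : xiP (m:ℤ) q t
        = MvPolynomial.C (B (j + p) q) * Pneg (j - p) (j + p - 1) :=
      xiP_pos (m:ℤ) q t (j - p + 1) (j - p) (j + p - 1) (j + p) (by omega) ht2
        (by omega) (by omega) (by omega) (by omega)
    have EM : xiM (m:ℤ) 1 t = MvPolynomial.C (B j 1) * Pneg j j :=
      xiM_pos (m:ℤ) 1 t j j (by omega) ht2 (by omega) (by omega)
    have ER : xiM (m:ℤ) (q+1) t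
        = MvPolynomial.C (B (j + p) (q+1)) * Pneg (j - p) (j + p) :=
      xiM_pos (m:ℤ) (q+1) t (j - p) (j + p) (by omega) ht2 (by omega) (by omega)
    rw [EP, EM, EQ, Pneg_single, Pneg_single, B_one j (by omega), B_one (p:ℤ) (by omega), ER]
    have hdiff : (MvPolynomial.C ((j:ℤ):ℚ)) * (-va + MvPolynomial.C ((j:ℤ):ℚ) * vd)
        - (MvPolynomial.C (((p:ℤ)):ℚ)) * (-va + MvPolynomial.C (((p:ℤ)):ℚ) * vd)
        = MvPolynomial.C (((j - p : ℤ)):ℚ) * (-va + MvPolynomial.C (((j + p : ℤ)):ℚ) * vd) := by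
      push_cast
      rw [map_add, map_sub]
      ring
    have key : Pneg (j - p) (j + p)
        = Pneg (j - p) (j + p - 1) * (-va + MvPolynomial.C (((j + p : ℤ)):ℚ) * vd) :=
      Pneg_top (j - p) (j + p) (by omega)
    have hsc : (MvPolynomial.C (B (j + p) q) * MvPolynomial.C (((j - p : ℤ)):ℚ) : Rpoly)
        = MvPolynomial.C (((q+1:ℕ)):ℚ) * MvPolynomial.C (B (j + p) (q+1)) := by
      rw [← map_mul, ← map_mul]
      congr 1
      have h := Bmul1 (j + (p:ℤ)) q (by omega)
      push_cast at h ⊢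
      have hq : (q:ℚ) = (p:ℚ) + (p:ℚ) := by exact_mod_cast hp
      rw [show (j:ℚ) - (p:ℚ) = (j:ℚ) + (p:ℚ) - (q:ℚ) by rw [hq]; ring]
      linarith [h]
    rw [hdiff, key, ← map_natCast (MvPolynomial.C : ℚ →+* Rpoly) (q+1)]
    linear_combination (Pneg (j - p) (j + p - 1) * (-va + MvPolynomial.C (((j + p : ℤ)):ℚ) * vd)) * hsc
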